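/- Let φ, X : ℝ → ℝ with φ(x) = exp(-1/x²) for x ≠ 0, φ(0) = 0, and X(x) = (2/x³)exp(-1/x²) for x < 0, X(0) = 0, X(x) = (1/x³)exp(-1/x²) for x > 0. Then there is no continuous function g : ℝ → ℝ with g(x) > 0 for all x such that φ'(x) = g(x)·X(x) for all x ∈ ℝ. -/

import Mathlib

lemma flat_deriv {x : ℝ} (hx : x ≠ 0) :
    HasDerivAt (fun y : ℝ => if y = 0 then 0 else Real.exp (-1 / y ^ 2))
      ((2 / x ^ 3) * Real.exp (-1 / x ^ 2)) x := by
  have h1 : HasDerivAt (fun y : ℝ => y ^ 2) (2 * x) x := by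
    simpa using hasDerivAt_pow 2 x
  have h2 := (h1.inv (pow_ne_zero 2 hx)).neg
  have h3 := h2.exp
  have h4 : HasDerivAt (fun y : ℝ => Real.exp (-1 / y ^ 2))
      ((2 / x ^ 3) * Real.exp (-1 / x ^ 2)) x := by
    have hfun : (fun y : ℝ => Real.exp (-(y ^ 2)⁻¹)) = fun y => Real.exp (-1 / y ^ 2) := by
      funext y; rw [show (-(y ^ 2)⁻¹ : ℝ) = -1 / y ^ 2 by ring]
    have heq : Real.exp (-(x ^ 2)⁻¹) * -(-(2 * x) / (x ^ 2) ^ 2)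
        = (2 / x ^ 3) * Real.exp (-1 / x ^ 2) := by
      rw [show (-(x ^ 2)⁻¹ : ℝ) = -1 / x ^ 2 by ring]
      field_simp
    rw [← hfun, ← heq]
    exact h3
  refine h4.congr_of_eventuallyEq ?_
  filter_upwards [eventually_ne_nhds hx] with y hy
  simp [hy]

theorem flat_example_not_gradlike :
    let φ : ℝ → ℝ := fun x => if x = 0 then 0 else Real.exp (-1 / x ^ 2)
    let X : ℝ → ℝ := fun x =>
      if x < 0 then (2 / x ^ 3) * Real.exp (-1 / x ^ 2)
      else if x = 0 then 0 else (1 / x ^ 3) * Real.exp (-1 / x ^ 2)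
    ¬ ∃ g : ℝ → ℝ, Continuous g ∧ (∀ x, 0 < g x) ∧
      ∀ x : ℝ, deriv φ x = g x * X x := by
  intro φ X
  rintro ⟨g, hg, hpos, hder⟩
  -- g = 2 on (0, ∞)
  have hgt : ∀ x : ℝ, 0 < x → g x = 2 := by
    intro x hx
    have hx0 : x ≠ 0 := ne_of_gt hx
    have hd : deriv φ x = (2 / x ^ 3) * Real.exp (-1 / x ^ 2) := (flat_deriv hx0).deriv
    have hX : X x = (1 / x ^ 3) * Real.exp (-1 / x ^ 2) := by
      simp [X, not_lt.mpr hx.le, hx0]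
    have := hder x
    rw [hd, hX] at this
    have hE : Real.exp (-1 / x ^ 2) ≠ 0 := Real.exp_ne_zero _
    have hx3 : x ^ 3 ≠ 0 := pow_ne_zero 3 hx0
    field_simp at this
    linarith
  -- g = 1 on (-∞, 0)
  have hlt : ∀ x : ℝ, x < 0 → g x = 1 := by
    intro x hx
    have hx0 : x ≠ 0 := ne_of_lt hx
    have hd : deriv φ x = (2 / x ^ 3) * Real.exp (-1 / x ^ 2) := (flat_deriv hx0).deriv
    have hX : X x = (2 / x ^ 3) * Real.exp (-1 / x ^ 2) := by
      simp [X, hx]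
    have := hder x
    rw [hd, hX] at this
    have hE : Real.exp (-1 / x ^ 2) ≠ 0 := Real.exp_ne_zero _
    have hx3 : x ^ 3 ≠ 0 := pow_ne_zero 3 hx0
    field_simp at this
    linarith
  -- limits from the right and left
  have h2 : Filter.Tendsto g (nhdsWithin 0 (Set.Ioi 0)) (nhds (g 0)) :=
    (hg.continuousAt.tendsto).mono_left nhdsWithin_le_nhds
  have h2' : Filter.Tendsto g (nhdsWithin 0 (Set.Ioi 0)) (nhds 2) := by
    refine Filter.Tendsto.congr' ?_ tendsto_const_nhds
    filter_upwards [self_mem_nhdsWithin] with y hy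
    exact (hgt y hy).symm
  have h1 : Filter.Tendsto g (nhdsWithin 0 (Set.Iio 0)) (nhds (g 0)) :=
    (hg.continuousAt.tendsto).mono_left nhdsWithin_le_nhds
  have h1' : Filter.Tendsto g (nhdsWithin 0 (Set.Iio 0)) (nhds 1) := by
    refine Filter.Tendsto.congr' ?_ tendsto_const_nhds
    filter_upwards [self_mem_nhdsWithin] with y hy
    exact (hlt y hy).symm
  have e2 : g 0 = 2 := tendsto_nhds_unique h2 h2'
  have e1 : g 0 = 1 := tendsto_nhds_unique h1 h1'
  rw [e2] at e1
  norm_num at e1
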